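/- Let u_- ≥ 0 ≥ u_+ with u_- > u_+ and v_± > 0. With v_*(ε) as in the two-shock intermediate state formula, v_*(ε) → +∞ as ε → 0⁺ (i.e., for every M there is δ > 0 such that v_*(ε) > M for all 0 < ε < δ). -/

import Mathlib

open Filter Real Topology

theorem vstar_limit_infty (um up vm vp : ℝ) (h1 : um ≥ 0) (h2 : 0 ≥ up)
    (h3 : um > up) (hvm : 0 < vm) (hvp : 0 < vp) :
    Filter.Tendsto (fun e : ℝ =>
      (up - um - ((up + Real.sqrt (up ^ 2 + 4 * e * vp)) / (2 * vp)) * vp + ((um - Real.sqrt (um ^ 2 + 4 * e * vm)) / (2 * vm)) * vm) / ((um - Real.sqrt (um ^ 2 + 4 * e * vm)) / (2 * vm) - (up + Real.sqrt (up ^ 2 + 4 * e * vp)) / (2 * vp)))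
      (nhdsWithin 0 (Set.Ioi 0)) Filter.atTop := by
  set f : ℝ → ℝ := fun e => Real.sqrt (um ^ 2 + 4 * e * vm) with hfdef
  set g : ℝ → ℝ := fun e => Real.sqrt (up ^ 2 + 4 * e * vp) with hgdef
  set N : ℝ → ℝ := fun e =>
    up - um - (up + g e) / (2 * vp) * vp + (um - f e) / (2 * vm) * vm with hNdef
  set D : ℝ → ℝ := fun e => (um - f e) / (2 * vm) - (up + g e) / (2 * vp) with hDdef
  have hf0 : f 0 = um := by
    simp only [hfdef, mul_zero, zero_mul, add_zero]
    exact Real.sqrt_sq h1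
  have hg0 : g 0 = -up := by
    simp only [hgdef, mul_zero, zero_mul, add_zero]
    rw [Real.sqrt_sq_eq_abs, abs_of_nonpos h2]
  have hNc : ContinuousAt N 0 := by fun_prop
  have hDc : ContinuousAt D 0 := by fun_prop
  have hN0 : N 0 = up - um := by
    rw [hNdef]; simp only [hf0, hg0]
    field_simp
    ring
  have hD0 : D 0 = 0 := by
    rw [hDdef]; simp only [hf0, hg0]
    field_simp
    ring
  have hN : Tendsto N (𝓝[>] (0:ℝ)) (𝓝 (up - um)) := by
    have := hNc.tendsto.mono_left (nhdsWithin_le_nhds (s := Set.Ioi (0:ℝ)))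
    rwa [hN0] at this
  have hD : Tendsto D (𝓝[>] (0:ℝ)) (𝓝 0) := by
    have := hDc.tendsto.mono_left (nhdsWithin_le_nhds (s := Set.Ioi (0:ℝ)))
    rwa [hD0] at this
  -- D e < 0 for e > 0
  have hDneg : ∀ e : ℝ, 0 < e → D e < 0 := by
    intro e he
    have hfm : um < f e := by
      have : Real.sqrt (um ^ 2) < Real.sqrt (um ^ 2 + 4 * e * vm) :=
        Real.sqrt_lt_sqrt (sq_nonneg um) (by nlinarith)
      rwa [Real.sqrt_sq h1] at this
    have hgp : -up < g e := by
      have : Real.sqrt (up ^ 2) < Real.sqrt (up ^ 2 + 4 * e * vp) :=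
        Real.sqrt_lt_sqrt (sq_nonneg up) (by nlinarith)
      rwa [Real.sqrt_sq_eq_abs, abs_of_nonpos h2] at this
    have t1 : (um - f e) / (2 * vm) < 0 :=
      div_neg_of_neg_of_pos (by linarith) (by linarith)
    have t2 : 0 < (up + g e) / (2 * vp) :=
      div_pos (by linarith) (by linarith)
    rw [hDdef]
    dsimp only
    linarith
  have hDneg' : Tendsto (fun e => -D e) (𝓝[>] (0:ℝ)) (𝓝[>] (0:ℝ)) := by
    rw [tendsto_nhdsWithin_iff]
    constructor
    · simpa using hD.neg
    · filter_upwards [self_mem_nhdsWithin] with e he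
      exact Set.mem_Ioi.mpr (by linarith [hDneg e he])
  have hinv : Tendsto (fun e => (-D e)⁻¹) (𝓝[>] (0:ℝ)) atTop :=
    tendsto_inv_nhdsGT_zero.comp hDneg'
  have hmul : Tendsto (fun e => (-D e)⁻¹ * (-N e)) (𝓝[>] (0:ℝ)) atTop :=
    hinv.atTop_mul_pos (C := um - up) (by linarith) (by simpa using hN.neg)
  have heq : (fun e => (-D e)⁻¹ * (-N e)) = fun e => N e / D e := by
    funext e
    rw [inv_neg, div_eq_mul_inv]
    ring
  rw [heq] at hmul
  exact hmul
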